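/- arXiv:1709.03528 — 2 statements merged into one kernel-verified Lean document; each statement's English description precedes it below -/
import Mathlib

section
/- Let f : ℝ^d → ℝ be twice continuously differentiable with L-Lipschitz Hessian, let w⋆ satisfy ∇f(w⋆) = 0, and let w_t ∈ ℝ^d with g_t := ∇f(w_t), H_t := ∇²f(w_t) positive definite, and φ_t(p) := ½pᵀH_t p − pᵀg_t. Let α ∈ (0,1) and suppose p̃_t ∈ ℝ^d satisfies φ_t(p̃_t) ≤ (1 − α²)·min_p φ_t(p). Then, with w_{t+1} := w_t − p̃_t, Δ_t := w_t − w⋆, and Δ_{t+1} := w_{t+1} − w⋆, one has Δ_{t+1}ᵀ H_t Δ_{t+1} ≤ L·‖Δ_t‖₂²·‖Δ_{t+1}‖₂ + (α²/(1 − α²))·Δ_tᵀ H_t Δ_t. -/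
open InnerProductSpace
variable {E : Type*} [NormedAddCommGroup E] [InnerProductSpace ℝ E] [CompleteSpace E]

lemma grad_differentiable (f : E → ℝ) (hf : ContDiff ℝ 2 f) :
    Differentiable ℝ (gradient f) := by
  have h1 : ContDiff ℝ 1 (fderiv ℝ f) := hf.fderiv_right (le_refl 2)
  have h : gradient f = fun y => (toDual ℝ E).symm (fderiv ℝ f y) := rfl
  rw [h]
  exact (toDual ℝ E).symm.toContinuousLinearEquiv.differentiable.comp (h1.differentiable (by norm_num))

lemma grad_fderiv_symm (f : E → ℝ) (hf : ContDiff ℝ 2 f) (x v w : E) :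
    (inner ℝ v (fderiv ℝ (gradient f) x w) : ℝ) = (inner ℝ w (fderiv ℝ (gradient f) x v) : ℝ) := by
  set A := fderiv ℝ (gradient f) x with hA
  have hgd := grad_differentiable f hf
  have hff : ∀ y, HasFDerivAt f ((innerSL ℝ : E →L[ℝ] E →L[ℝ] ℝ) (gradient f y)) y := by
    intro y
    have h1 : HasGradientAt f (gradient f y) y :=
      ((hf.differentiable (by norm_num)) y).hasGradientAt
    have h2 : HasFDerivAt f ((toDual ℝ E) (gradient f y)) y := h1.hasFDerivAt
    convert h2 using 2
    ext z; simp [toDual_apply_apply]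
  have hf'' : HasFDerivAt (fun y => (innerSL ℝ : E →L[ℝ] E →L[ℝ] ℝ) (gradient f y))
      ((innerSL ℝ : E →L[ℝ] E →L[ℝ] ℝ).comp A) x :=
    ((innerSL ℝ : E →L[ℝ] E →L[ℝ] ℝ).hasFDerivAt).comp x (hgd x).hasFDerivAt
  have hsym := second_derivative_symmetric hff hf'' v w
  simp only [ContinuousLinearMap.coe_comp', Function.comp_apply, innerSL_apply_apply] at hsym
  linarith [hsym, real_inner_comm (A w) v, real_inner_comm (A v) w]

lemma taylor_grad_bound (F : E → E) (L : ℝ) (hF : Differentiable ℝ F)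
    (hLip : ∀ x y : E, ‖fderiv ℝ F x - fderiv ℝ F y‖ ≤ L * ‖x - y‖) (a b : E) :
    ‖F b - F a - fderiv ℝ F b (b - a)‖ ≤ L / 2 * ‖b - a‖ ^ 2 := by
  set v := b - a with hv
  set G : ℝ → E := fun t => F (a + t • v) - t • (fderiv ℝ F b v) with hG
  set G' : ℝ → E := fun t => fderiv ℝ F (a + t • v) v - fderiv ℝ F b v with hG'
  have hFc : Continuous (fun x => fderiv ℝ F x) := by
    rw [Metric.continuous_iff]
    intro x ε hε
    rcases le_or_gt L 0 with hL | hL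
    · exact ⟨1, by norm_num, fun y hy => by
        have := hLip y x
        have h2 : ‖fderiv ℝ F y - fderiv ℝ F x‖ ≤ 0 :=
          this.trans (mul_nonpos_of_nonpos_of_nonneg hL (norm_nonneg _))
        rw [dist_eq_norm]
        calc ‖fderiv ℝ F y - fderiv ℝ F x‖ ≤ 0 := h2
        _ < ε := hε⟩
    · refine ⟨ε / L, by positivity, fun y hy => ?_⟩
      rw [dist_eq_norm]
      calc ‖fderiv ℝ F y - fderiv ℝ F x‖ ≤ L * ‖y - x‖ := hLip y x
      _ < L * (ε / L) := by
          apply mul_lt_mul_of_pos_left _ hL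
          rw [← dist_eq_norm]; exact hy
      _ = ε := by field_simp
  have hGd : ∀ t ∈ Set.uIcc (0:ℝ) 1, HasDerivAt G (G' t) t := by
    intro t _
    have h1 : HasDerivAt (fun s : ℝ => a + s • v) v t := by
      simpa using ((hasDerivAt_id t).smul_const v).const_add a
    have h2 : HasDerivAt (fun s : ℝ => F (a + s • v)) (fderiv ℝ F (a + t • v) v) t :=
      (hF (a + t • v)).hasFDerivAt.comp_hasDerivAt t h1
    have h3 : HasDerivAt (fun s : ℝ => s • (fderiv ℝ F b v)) (fderiv ℝ F b v) t := by
      simpa using (hasDerivAt_id t).smul_const (fderiv ℝ F b v)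
    exact h2.sub h3
  have hG'c : Continuous G' := by
    apply Continuous.sub _ continuous_const
    have : Continuous fun t : ℝ => fderiv ℝ F (a + t • v) :=
      hFc.comp (continuous_const.add (continuous_id.smul continuous_const))
    exact this.clm_apply continuous_const
  have hint : IntervalIntegrable G' MeasureTheory.volume 0 1 :=
    hG'c.intervalIntegrable 0 1
  have heq : ∫ t in (0:ℝ)..1, G' t = G 1 - G 0 :=
    intervalIntegral.integral_eq_sub_of_hasDerivAt hGd hint
  have hG1 : G 1 - G 0 = F b - F a - fderiv ℝ F b v := by
    simp only [hG, one_smul, zero_smul, sub_zero, add_zero]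
    have : a + v = b := by rw [hv]; abel
    rw [this]
    abel
  have hbound : ∀ t ∈ Set.Icc (0:ℝ) 1, ‖G' t‖ ≤ L * ‖v‖ ^ 2 * (1 - t) := by
    intro t ht
    have h1 : ‖G' t‖ ≤ ‖fderiv ℝ F (a + t • v) - fderiv ℝ F b‖ * ‖v‖ := by
      have := (fderiv ℝ F (a + t • v) - fderiv ℝ F b).le_opNorm v
      simpa using this
    have h2 : ‖fderiv ℝ F (a + t • v) - fderiv ℝ F b‖ ≤ L * ((1 - t) * ‖v‖) := by
      have := hLip (a + t • v) b
      have heq2 : a + t • v - b = -((1 - t) • v) := by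
        rw [hv]; module
      rw [heq2, norm_neg, norm_smul] at this
      simpa [abs_of_nonneg (by linarith [ht.2] : (0:ℝ) ≤ 1 - t)] using this
    calc ‖G' t‖ ≤ ‖fderiv ℝ F (a + t • v) - fderiv ℝ F b‖ * ‖v‖ := h1
    _ ≤ L * ((1 - t) * ‖v‖) * ‖v‖ := by
        apply mul_le_mul_of_nonneg_right h2 (norm_nonneg _)
    _ = L * ‖v‖ ^ 2 * (1 - t) := by ring
  have hmono : ∫ t in (0:ℝ)..1, ‖G' t‖ ≤ ∫ t in (0:ℝ)..1, L * ‖v‖ ^ 2 * (1 - t) := by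
    apply intervalIntegral.integral_mono_on (by norm_num)
      (hG'c.norm.intervalIntegrable 0 1)
      ((continuous_const.mul (continuous_const.sub continuous_id)).intervalIntegrable 0 1)
    exact hbound
  have hval : ∫ t in (0:ℝ)..1, L * ‖v‖ ^ 2 * (1 - t) = L / 2 * ‖v‖ ^ 2 := by
    rw [intervalIntegral.integral_const_mul]
    have h2 : ∫ t in (0:ℝ)..1, (1 - t) = 1 / 2 := by
      rw [intervalIntegral.integral_sub intervalIntegrable_const
        intervalIntegral.intervalIntegrable_id]
      simp
      norm_num
    rw [h2]
    ring
  calc ‖F b - F a - fderiv ℝ F b v‖ = ‖∫ t in (0:ℝ)..1, G' t‖ := by rw [heq, hG1]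
  _ ≤ ∫ t in (0:ℝ)..1, ‖G' t‖ := intervalIntegral.norm_integral_le_integral_norm (by norm_num)
  _ ≤ L / 2 * ‖v‖ ^ 2 := hmono.trans (le_of_eq hval)


set_option maxHeartbeats 1000000 in
/-- **Lemma 8 (convergence of the approximate Newton step).**
If `f` is `C²` with `L`-Lipschitz Hessian, `∇f(w⋆) = 0`, `H_t = ∇²f(w_t)` is
positive definite, `φ_t(p) = ½pᵀH_t p − pᵀg_t` with `g_t = ∇f(w_t)`, and the
direction `p̃_t` satisfies `φ_t(p̃_t) ≤ (1 − α²)·min_p φ_t(p)` for some `α ∈ (0,1)`,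
then with `w_{t+1} = w_t − p̃_t`, `Δ_t = w_t − w⋆`, `Δ_{t+1} = w_{t+1} − w⋆`:
`Δ_{t+1}ᵀH_tΔ_{t+1} ≤ L‖Δ_t‖²‖Δ_{t+1}‖ + (α²/(1−α²))·Δ_tᵀH_tΔ_t`. -/
theorem giant_newton_step_convergence
    (d : ℕ) (f : EuclideanSpace ℝ (Fin d) → ℝ) (L : ℝ)
    (hf : ContDiff ℝ 2 f)
    (hLip : ∀ w w' : EuclideanSpace ℝ (Fin d),
      ‖fderiv ℝ (gradient f) w - fderiv ℝ (gradient f) w'‖ ≤ L * ‖w - w'‖)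
    (wstar wt : EuclideanSpace ℝ (Fin d))
    (hstar : gradient f wstar = 0)
    (Ht : EuclideanSpace ℝ (Fin d) →L[ℝ] EuclideanSpace ℝ (Fin d))
    (hHt : Ht = fderiv ℝ (gradient f) wt)
    (hpos : ∀ x : EuclideanSpace ℝ (Fin d), x ≠ 0 → 0 < (inner ℝ x (Ht x) : ℝ))
    (gt : EuclideanSpace ℝ (Fin d)) (hgt : gt = gradient f wt)
    (φ : EuclideanSpace ℝ (Fin d) → ℝ)
    (hφ : ∀ p, φ p = (1 / 2) * (inner ℝ p (Ht p) : ℝ) - (inner ℝ p gt : ℝ))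
    (α : ℝ) (hα : α ∈ Set.Ioo (0 : ℝ) 1)
    (ptilde : EuclideanSpace ℝ (Fin d))
    (hpt : φ ptilde ≤ (1 - α ^ 2) * (⨅ p, φ p))
    (wt1 Δt Δt1 : EuclideanSpace ℝ (Fin d))
    (hwt1 : wt1 = wt - ptilde)
    (hΔt : Δt = wt - wstar) (hΔt1 : Δt1 = wt1 - wstar) :
    (inner ℝ Δt1 (Ht Δt1) : ℝ)
      ≤ L * ‖Δt‖ ^ 2 * ‖Δt1‖ + (α ^ 2 / (1 - α ^ 2)) * (inner ℝ Δt (Ht Δt) : ℝ) := by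
  obtain hsub | hnt := subsingleton_or_nontrivial (EuclideanSpace ℝ (Fin d))
  · have h0 : Δt1 = 0 := Subsingleton.elim _ _
    have h0' : Δt = 0 := Subsingleton.elim _ _
    rw [h0, h0']
    simp
  have hs : (0:ℝ) < 1 - α ^ 2 := by
    obtain ⟨h1, h2⟩ := hα
    nlinarith
  have hΔrel : Δt1 = Δt - ptilde := by rw [hΔt1, hwt1, hΔt]; abel
  have hptd : ptilde = Δt - Δt1 := by rw [hΔrel]; abel
  -- symmetry of Ht
  have hsym : ∀ v w : EuclideanSpace ℝ (Fin d),
      (inner ℝ v (Ht w) : ℝ) = (inner ℝ w (Ht v) : ℝ) := by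
    intro v w; rw [hHt]; exact grad_fderiv_symm f hf wt v w
  -- Taylor bound
  have htay : ‖gt - Ht Δt‖ ≤ L / 2 * ‖Δt‖ ^ 2 := by
    have h := taylor_grad_bound (gradient f) L (grad_differentiable f hf)
      (fun x y => hLip x y) wstar wt
    rw [hgt, hHt, hΔt]
    simpa [hstar] using h
  -- smallest eigenvalue bound
  obtain ⟨x0, hx0mem, hx0min⟩ := (isCompact_sphere (0 : EuclideanSpace ℝ (Fin d)) 1).exists_isMinOn
    (NormedSpace.sphere_nonempty.mpr zero_le_one)
    (f := fun x => (inner ℝ x (Ht x) : ℝ))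
    ((continuous_id.inner Ht.continuous).continuousOn)
  have hx0norm : ‖x0‖ = 1 := mem_sphere_zero_iff_norm.mp hx0mem
  set m : ℝ := inner ℝ x0 (Ht x0) with hmdef
  have hm : 0 < m := hpos x0 (by rw [← norm_ne_zero_iff, hx0norm]; norm_num)
  have hlow : ∀ x : EuclideanSpace ℝ (Fin d), m * ‖x‖ ^ 2 ≤ (inner ℝ x (Ht x) : ℝ) := by
    intro x
    rcases eq_or_ne x 0 with rfl | hx
    · simp
    · have hxn : ‖x‖ ≠ 0 := norm_ne_zero_iff.mpr hx
      set u : EuclideanSpace ℝ (Fin d) := ‖x‖⁻¹ • x with hu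
      have hun : ‖u‖ = 1 := by
        rw [hu, norm_smul, norm_inv, norm_norm, inv_mul_cancel₀ hxn]
      have hmu : m ≤ (inner ℝ u (Ht u) : ℝ) := hx0min (mem_sphere_zero_iff_norm.mpr hun)
      have hxu : x = ‖x‖ • u := by
        rw [hu, smul_smul, mul_inv_cancel₀ hxn, one_smul]
      have hexp : (inner ℝ x (Ht x) : ℝ) = ‖x‖ ^ 2 * (inner ℝ u (Ht u) : ℝ) := by
        conv_lhs => rw [hxu]
        rw [map_smul, real_inner_smul_left, real_inner_smul_right]
        ring
      rw [hexp]
      nlinarith [sq_nonneg ‖x‖]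
  -- φ is bounded below
  have hbdd : BddBelow (Set.range φ) := by
    refine ⟨-‖gt‖ ^ 2 / (2 * m), ?_⟩
    rintro y ⟨p, rfl⟩
    rw [hφ]
    have h1 := hlow p
    have h2 : (inner ℝ p gt : ℝ) ≤ ‖p‖ * ‖gt‖ := real_inner_le_norm p gt
    rw [div_le_iff₀ (by positivity : (0:ℝ) < 2 * m)]
    nlinarith [sq_nonneg (m * ‖p‖ - ‖gt‖),
      mul_le_mul_of_nonneg_left h1 (le_of_lt hm),
      mul_le_mul_of_nonneg_left h2 (le_of_lt hm)]
  -- compare with the scaled point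
  have hinf : (⨅ p, φ p) ≤ φ ((1 / (1 - α ^ 2)) • Δt) := ciInf_le hbdd _
  have hkey : φ ptilde ≤ (1 - α ^ 2) * φ ((1 / (1 - α ^ 2)) • Δt) :=
    hpt.trans (mul_le_mul_of_nonneg_left hinf (le_of_lt hs))
  have e1 : φ ptilde = 1 / 2 * (inner ℝ Δt (Ht Δt) : ℝ) - (inner ℝ Δt1 (Ht Δt) : ℝ)
      + 1 / 2 * (inner ℝ Δt1 (Ht Δt1) : ℝ) - (inner ℝ Δt gt : ℝ) + (inner ℝ Δt1 gt : ℝ) := by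
    rw [hφ, hptd, map_sub]
    simp only [inner_sub_left, inner_sub_right]
    rw [hsym Δt Δt1]
    ring
  have hck : (1 - α ^ 2) * φ ((1 / (1 - α ^ 2)) • Δt)
      = 1 / 2 * (inner ℝ Δt (Ht Δt) : ℝ) - (inner ℝ Δt gt : ℝ)
        + 1 / 2 * (α ^ 2 / (1 - α ^ 2)) * (inner ℝ Δt (Ht Δt) : ℝ) := by
    rw [hφ, map_smul]
    simp only [real_inner_smul_left, real_inner_smul_right]
    field_simp
    ring
  have I2 : (inner ℝ Δt1 (Ht Δt) : ℝ) - (inner ℝ Δt1 gt : ℝ) ≤ ‖Δt1‖ * (L / 2 * ‖Δt‖ ^ 2) := by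
    have h1 : (inner ℝ Δt1 (Ht Δt) : ℝ) - (inner ℝ Δt1 gt : ℝ) = (inner ℝ Δt1 (Ht Δt - gt) : ℝ) := by
      rw [inner_sub_right]
    rw [h1]
    calc (inner ℝ Δt1 (Ht Δt - gt) : ℝ) ≤ ‖Δt1‖ * ‖Ht Δt - gt‖ := real_inner_le_norm _ _
    _ ≤ ‖Δt1‖ * (L / 2 * ‖Δt‖ ^ 2) := by
        apply mul_le_mul_of_nonneg_left _ (norm_nonneg _)
        rw [norm_sub_rev]
        exact htay
  rw [e1, hck] at hkey
  nlinarith [hkey, I2]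
end

section
/- Let A ∈ ℝ^{n×d} and let M ∈ ℝ^{d×d} be symmetric positive semidefinite, with H := AᵀA + M positive definite. Then H^{−1/2}(AᵀA)H^{−1/2} ⪯ ϑ·I_d in the Loewner order, where ϑ := σ_max(AᵀA)/(σ_max(AᵀA) + σ_min(M)) ≤ 1. -/
open Matrix

/-- Largest eigenvalue of a (symmetric) real matrix, as the supremum of its spectrum. -/
noncomputable def sigmaMax {d : ℕ} (A : Matrix (Fin d) (Fin d) ℝ) : ℝ :=
  sSup (spectrum ℝ A)

/-- Smallest eigenvalue of a (symmetric) real matrix, as the infimum of its spectrum. -/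
noncomputable def sigmaMin {d : ℕ} (A : Matrix (Fin d) (Fin d) ℝ) : ℝ :=
  sInf (spectrum ℝ A)

/-- The positive semidefinite square root of a positive semidefinite matrix
(the definition `Matrix.PosSemidef.sqrt` of the older Mathlib, since removed). -/
noncomputable def Matrix.PosSemidef.sqrt {n : Type*} [Fintype n] [DecidableEq n]
    {A : Matrix n n ℝ} (hA : A.PosSemidef) : Matrix n n ℝ :=
  (hA.1.eigenvectorUnitary : Matrix n n ℝ) * diagonal ((↑) ∘ Real.sqrt ∘ hA.1.eigenvalues) *
    (star hA.1.eigenvectorUnitary : Matrix n n ℝ)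

lemma sqrt_psd_aux {d : ℕ} {B : Matrix (Fin d) (Fin d) ℝ} (hB : B.PosSemidef) :
    hB.sqrt.PosSemidef := by
  unfold Matrix.PosSemidef.sqrt
  rw [Matrix.star_eq_conjTranspose]
  exact Matrix.PosSemidef.mul_mul_conjTranspose_same
    (Matrix.posSemidef_diagonal_iff.mpr fun i => by simp [Real.sqrt_nonneg]) _

lemma sqrt_mul_self_aux {d : ℕ} {B : Matrix (Fin d) (Fin d) ℝ} (hB : B.PosSemidef) :
    hB.sqrt * hB.sqrt = B := by
  have hU : (star hB.1.eigenvectorUnitary : Matrix (Fin d) (Fin d) ℝ)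
      * (hB.1.eigenvectorUnitary : Matrix (Fin d) (Fin d) ℝ) = 1 :=
    Unitary.star_mul_self_of_mem hB.1.eigenvectorUnitary.2
  unfold Matrix.PosSemidef.sqrt
  conv_rhs => rw [hB.1.spectral_theorem, Unitary.conjStarAlgAut_apply]
  have hD : diagonal ((fun x : ℝ => x) ∘ Real.sqrt ∘ hB.1.eigenvalues)
      * diagonal ((fun x : ℝ => x) ∘ Real.sqrt ∘ hB.1.eigenvalues)
      = diagonal (RCLike.ofReal ∘ hB.1.eigenvalues) := by
    rw [diagonal_mul_diagonal]
    congr 1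
    funext i
    simp [Real.mul_self_sqrt (hB.eigenvalues_nonneg i)]
  rw [← hD]
  simp only [Matrix.mul_assoc]
  rw [← Matrix.mul_assoc (star _ : Matrix (Fin d) (Fin d) ℝ) _ _, hU, Matrix.one_mul]

lemma psd_smul' {d : ℕ} {B : Matrix (Fin d) (Fin d) ℝ} (hB : B.PosSemidef) {c : ℝ}
    (hc : 0 ≤ c) : (c • B).PosSemidef := by
  refine ⟨?_, fun x => ?_⟩
  · rw [Matrix.IsHermitian, Matrix.conjTranspose_smul, hB.1.eq, star_trivial]
  · exact (hB.smul hc).2 x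

lemma smul_one_sub_psd {d : ℕ} {B : Matrix (Fin d) (Fin d) ℝ} (hB : B.IsHermitian) {c : ℝ}
    (hc : ∀ i, hB.eigenvalues i ≤ c) : (c • (1 : Matrix (Fin d) (Fin d) ℝ) - B).PosSemidef := by
  have h1 : c • (1 : Matrix (Fin d) (Fin d) ℝ) - B
      = (hB.eigenvectorUnitary : Matrix (Fin d) (Fin d) ℝ)
        * diagonal (fun i => c - hB.eigenvalues i)
        * (star hB.eigenvectorUnitary : Matrix (Fin d) (Fin d) ℝ) := by
    conv_lhs => rw [hB.spectral_theorem, Unitary.conjStarAlgAut_apply]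
    have hU : (hB.eigenvectorUnitary : Matrix (Fin d) (Fin d) ℝ)
        * (star hB.eigenvectorUnitary : Matrix (Fin d) (Fin d) ℝ) = 1 :=
      Unitary.mul_star_self_of_mem hB.eigenvectorUnitary.2
    have : diagonal (fun i => c - hB.eigenvalues i)
        = c • (1 : Matrix (Fin d) (Fin d) ℝ) - diagonal (RCLike.ofReal ∘ hB.eigenvalues) := by
      rw [smul_one_eq_diagonal, diagonal_sub]
      rfl
    rw [this, Matrix.mul_sub, Matrix.sub_mul, Matrix.mul_smul, Matrix.smul_mul, mul_one, hU]
  rw [h1, Matrix.star_eq_conjTranspose]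
  exact Matrix.PosSemidef.mul_mul_conjTranspose_same
    (Matrix.posSemidef_diagonal_iff.mpr fun i => sub_nonneg.mpr (hc i)) _

lemma sub_smul_one_psd {d : ℕ} {B : Matrix (Fin d) (Fin d) ℝ} (hB : B.IsHermitian) {c : ℝ}
    (hc : ∀ i, c ≤ hB.eigenvalues i) : (B - c • (1 : Matrix (Fin d) (Fin d) ℝ)).PosSemidef := by
  have h1 : B - c • (1 : Matrix (Fin d) (Fin d) ℝ)
      = (hB.eigenvectorUnitary : Matrix (Fin d) (Fin d) ℝ)
        * diagonal (fun i => hB.eigenvalues i - c)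
        * (star hB.eigenvectorUnitary : Matrix (Fin d) (Fin d) ℝ) := by
    conv_lhs => rw [hB.spectral_theorem, Unitary.conjStarAlgAut_apply]
    have hU : (hB.eigenvectorUnitary : Matrix (Fin d) (Fin d) ℝ)
        * (star hB.eigenvectorUnitary : Matrix (Fin d) (Fin d) ℝ) = 1 :=
      Unitary.mul_star_self_of_mem hB.eigenvectorUnitary.2
    have : diagonal (fun i => hB.eigenvalues i - c)
        = diagonal (RCLike.ofReal ∘ hB.eigenvalues) - c • (1 : Matrix (Fin d) (Fin d) ℝ) := by
      rw [smul_one_eq_diagonal, diagonal_sub]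
      rfl
    rw [this, Matrix.mul_sub, Matrix.sub_mul, Matrix.mul_smul, Matrix.smul_mul, mul_one, hU]
  rw [h1, Matrix.star_eq_conjTranspose]
  exact Matrix.PosSemidef.mul_mul_conjTranspose_same
    (Matrix.posSemidef_diagonal_iff.mpr fun i => sub_nonneg.mpr (hc i)) _

/-- **The key curvature bound.**
For `M` symmetric positive semidefinite with `H = AᵀA + M` positive definite,
`H^{−1/2}(AᵀA)H^{−1/2} ⪯ ϑ·I` in the Loewner order, where
`ϑ = σmax(AᵀA)/(σmax(AᵀA) + σmin(M)) ≤ 1`. -/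
theorem curvature_ratio_bound
    (n d : ℕ) (A : Matrix (Fin n) (Fin d) ℝ)
    (M : Matrix (Fin d) (Fin d) ℝ) (hM : M.PosSemidef)
    (hH : (Aᵀ * A + M).PosDef)
    (ϑ : ℝ) (hϑ : ϑ = sigmaMax (Aᵀ * A) / (sigmaMax (Aᵀ * A) + sigmaMin M)) :
    ϑ ≤ 1 ∧
      (ϑ • (1 : Matrix (Fin d) (Fin d) ℝ)
        - (hH.posSemidef.sqrt)⁻¹ * (Aᵀ * A) * (hH.posSemidef.sqrt)⁻¹).PosSemidef := by
  simp only [sigmaMax, sigmaMin] at hϑ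
  -- degenerate case d = 0
  rcases Nat.eq_zero_or_pos d with hd | hd
  · subst hd
    have hemp : ∀ X : Matrix (Fin 0) (Fin 0) ℝ, spectrum ℝ X = ∅ := by
      intro X
      ext x
      simp only [Set.mem_empty_iff_false, iff_false, spectrum.mem_iff, not_not]
      exact isUnit_of_subsingleton _
    have hϑ0 : ϑ = 0 := by
      rw [hϑ, hemp, hemp, Real.sSup_empty, Real.sInf_empty]
      norm_num
    refine ⟨by rw [hϑ0]; norm_num, ?_⟩
    have : (ϑ • (1 : Matrix (Fin 0) (Fin 0) ℝ)
        - (hH.posSemidef.sqrt)⁻¹ * (Aᵀ * A) * (hH.posSemidef.sqrt)⁻¹) = 0 :=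
      Subsingleton.elim _ _
    rw [this]
    exact Matrix.PosSemidef.zero
  haveI : Nonempty (Fin d) := ⟨⟨0, hd⟩⟩
  set S : Matrix (Fin d) (Fin d) ℝ := Aᵀ * A with hSdef
  have hS : S.PosSemidef := posSemidef_conjTranspose_mul_self A
  set H : Matrix (Fin d) (Fin d) ℝ := S + M with hHdef
  set a : ℝ := sSup (spectrum ℝ S) with hadef
  set m : ℝ := sInf (spectrum ℝ M) with hmdef
  have hSspec : spectrum ℝ S = Set.range hS.1.eigenvalues := hS.1.spectrum_real_eq_range_eigenvalues
  have hMspec : spectrum ℝ M = Set.range hM.1.eigenvalues := hM.1.spectrum_real_eq_range_eigenvalues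
  have hSle : ∀ i, hS.1.eigenvalues i ≤ a := fun i =>
    le_csSup (S.finite_spectrum.bddAbove) (hS.1.eigenvalues_mem_spectrum_real i)
  have hmle : ∀ i, m ≤ hM.1.eigenvalues i := fun i =>
    csInf_le (M.finite_spectrum.bddBelow) (hM.1.eigenvalues_mem_spectrum_real i)
  have ha0 : 0 ≤ a := le_trans (hS.eigenvalues_nonneg (Classical.arbitrary _)) (hSle _)
  have hm0 : 0 ≤ m := by
    rw [hmdef, hMspec]
    exact le_csInf (Set.range_nonempty _) (by rintro x ⟨i, rfl⟩; exact hM.eigenvalues_nonneg i)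
  -- a + m > 0
  have ham : 0 < a + m := by
    rcases (lt_or_eq_of_le (add_nonneg ha0 hm0)) with h | h
    · exact h
    exfalso
    have ha' : a = 0 := le_antisymm (by linarith) ha0
    have hm' : m = 0 := le_antisymm (by linarith) hm0
    -- all eigenvalues of S vanish, hence S = 0
    have hS0 : S = 0 := by
      have heig : hS.1.eigenvalues = fun _ => 0 := funext fun i =>
        le_antisymm ((hSle i).trans (le_of_eq ha')) (hS.eigenvalues_nonneg i)
      have h2 := hS.1.spectral_theorem
      rw [heig] at h2
      simpa [Function.comp] using h2
    have hMpd : M.PosDef := by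
      have hH' := hH
      rw [hHdef, hS0, zero_add] at hH'
      exact hH'
    have hmem : m ∈ spectrum ℝ M :=
      (hMspec ▸ Set.range_nonempty _ : (spectrum ℝ M).Nonempty).csInf_mem M.finite_spectrum
    rw [hMspec] at hmem
    obtain ⟨i, hi⟩ := hmem
    have h5 : (0 : ℝ) < hM.1.eigenvalues i := hMpd.eigenvalues_pos i
    rw [hi, hm'] at h5
    exact lt_irrefl 0 h5
  -- θ ≤ 1
  have hθ1 : ϑ ≤ 1 := by
    rw [hϑ]
    exact (div_le_one ham).mpr (le_add_of_nonneg_right hm0)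
  refine ⟨hθ1, ?_⟩
  -- key: a•M - m•S is PSD
  have key : (a • M - m • S).PosSemidef := by
    have h1 : (a • (M - m • (1 : Matrix (Fin d) (Fin d) ℝ))).PosSemidef :=
      psd_smul' (sub_smul_one_psd hM.1 hmle) ha0
    have h2 : (m • (a • (1 : Matrix (Fin d) (Fin d) ℝ) - S)).PosSemidef :=
      psd_smul' (smul_one_sub_psd hS.1 hSle) hm0
    have h3 : a • M - m • S
        = a • (M - m • (1 : Matrix (Fin d) (Fin d) ℝ))
          + m • (a • (1 : Matrix (Fin d) (Fin d) ℝ) - S) := by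
      match_scalars <;> ring
    rw [h3]
    exact h1.add h2
  have key2 : (ϑ • H - S).PosSemidef := by
    have h3 : ϑ • H - S = (a + m)⁻¹ • (a • M - m • S) := by
      rw [hϑ, hHdef]
      match_scalars <;> field_simp <;> ring
    rw [h3]
    exact psd_smul' key (by positivity)
  -- conjugate by H^{-1/2}
  set R : Matrix (Fin d) (Fin d) ℝ := hH.posSemidef.sqrt with hRdef
  have hRpsd : R.PosSemidef := sqrt_psd_aux hH.posSemidef
  have hRR : R * R = H := sqrt_mul_self_aux hH.posSemidef
  have hRdet : IsUnit R.det := by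
    have : R.det * R.det = H.det := by rw [← det_mul, hRR]
    have hHdet : H.det ≠ 0 := hH.det_pos.ne'
    have : R.det ≠ 0 := fun h => hHdet (by rw [← this, h, mul_zero])
    exact this.isUnit
  have hRinvH : (R⁻¹).IsHermitian := by
    rw [Matrix.IsHermitian, Matrix.conjTranspose_nonsing_inv, hRpsd.1.eq]
  have hgoal : ϑ • (1 : Matrix (Fin d) (Fin d) ℝ) - R⁻¹ * S * R⁻¹
      = (R⁻¹)ᴴ * (ϑ • H - S) * R⁻¹ := by
    rw [hRinvH.eq, ← hRR, Matrix.mul_sub, Matrix.sub_mul]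
    congr 1
    rw [Matrix.mul_smul, Matrix.smul_mul]
    congr 1
    rw [show R⁻¹ * (R * R) * R⁻¹ = (R⁻¹ * R) * (R * R⁻¹) by noncomm_ring,
      Matrix.nonsing_inv_mul _ hRdet, Matrix.mul_nonsing_inv _ hRdet, mul_one]
  rw [show (hH.posSemidef.sqrt)⁻¹ * (Aᵀ * A) * (hH.posSemidef.sqrt)⁻¹ = R⁻¹ * S * R⁻¹ from rfl,
    hgoal]
  exact key2.conjTranspose_mul_mul_same R⁻¹
end
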